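/- arXiv:1306.0854 — 3 statements merged into one kernel-verified Lean document; each statement's English description precedes it below -/
import Mathlib

section
/- Let s ≠ 1 be a complex number. The fourth mixed partial derivative d/dz₁ d/dz₂ d/dw₁ d/dw₂ of F(w₁,w₂,z₁,z₂) = (s+w₁−1)(s+w₂−1)(s+z₁−1)(s+z₂−1) / [ (s−1)(s+w₁+w₂−1)(s+w₁+z₂−1)(s+z₁+w₂−1)(s+z₁+z₂−1) ], evaluated at w₁ = w₂ = z₁ = z₂ = 0, equals 7/(s−1)⁵. -/
set_option maxHeartbeats 1000000

open Filter

private lemma ev_ne (f : ℂ → ℂ) (hf : Continuous f) (h : f 0 ≠ 0) :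
    ∀ᶠ t in nhds (0:ℂ), f t ≠ 0 := hf.continuousAt.eventually_ne h

private lemma lvl1 (s w₁ z₁ z₂ : ℂ) (ha : s - 1 ≠ 0) (hb : s + w₁ - 1 ≠ 0)
    (hc : s + z₁ - 1 ≠ 0) (he : s + w₁ + z₂ - 1 ≠ 0) (hf : s + z₁ + z₂ - 1 ≠ 0) :
    deriv (fun w₂ : ℂ =>
      (s + w₁ - 1) * (s + w₂ - 1) * (s + z₁ - 1) * (s + z₂ - 1) /
        ((s - 1) * (s + w₁ + w₂ - 1) * (s + w₁ + z₂ - 1) *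
          (s + z₁ + w₂ - 1) * (s + z₁ + z₂ - 1))) 0
    = (s + z₂ - 1) * ((s + w₁ - 1) * (s + z₁ - 1) - (s - 1) * (s + w₁ - 1) - (s - 1) * (s + z₁ - 1)) /
        ((s - 1) * (s + w₁ + z₂ - 1) * (s + z₁ + z₂ - 1) * (s + w₁ - 1) * (s + z₁ - 1)) := by
  have hfun : (fun w₂ : ℂ =>
      (s + w₁ - 1) * (s + w₂ - 1) * (s + z₁ - 1) * (s + z₂ - 1) /
        ((s - 1) * (s + w₁ + w₂ - 1) * (s + w₁ + z₂ - 1) *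
          (s + z₁ + w₂ - 1) * (s + z₁ + z₂ - 1)))
      = fun w₂ : ℂ =>
        ((s + w₁ - 1) * (s + z₁ - 1) * (s + z₂ - 1) /
          ((s - 1) * (s + w₁ + z₂ - 1) * (s + z₁ + z₂ - 1))) *
        ((s + w₂ - 1) / ((s + w₁ + w₂ - 1) * (s + z₁ + w₂ - 1))) := by
    funext w₂
    rw [div_mul_div_comm]
    ring
  rw [hfun]
  have hl : HasDerivAt (fun w₂ : ℂ => s + w₂ - 1) 1 0 := by
    simpa using ((hasDerivAt_id (0:ℂ)).const_add s).sub_const 1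
  have hl1 : HasDerivAt (fun w₂ : ℂ => s + w₁ + w₂ - 1) 1 0 := by
    simpa using ((hasDerivAt_id (0:ℂ)).const_add (s + w₁)).sub_const 1
  have hl2 : HasDerivAt (fun w₂ : ℂ => s + z₁ + w₂ - 1) 1 0 := by
    simpa using ((hasDerivAt_id (0:ℂ)).const_add (s + z₁)).sub_const 1
  have hd0 : (s + w₁ + (0:ℂ) - 1) * (s + z₁ + (0:ℂ) - 1) ≠ 0 := by
    simp only [add_zero]; exact mul_ne_zero hb hc
  have hg := (hl.div (hl1.mul hl2) hd0).const_mul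
      ((s + w₁ - 1) * (s + z₁ - 1) * (s + z₂ - 1) /
        ((s - 1) * (s + w₁ + z₂ - 1) * (s + z₁ + z₂ - 1)))
  refine hg.deriv.trans ?_
  beta_reduce
  simp only [add_zero, one_mul, mul_one, Pi.mul_apply]
  rw [div_mul_div_comm, div_eq_div_iff
    (mul_ne_zero (mul_ne_zero (mul_ne_zero ha he) hf) (pow_ne_zero 2 (mul_ne_zero hb hc)))
    (mul_ne_zero (mul_ne_zero (mul_ne_zero (mul_ne_zero ha he) hf) hb) hc)]
  ring

private lemma lvl2 (s z₁ z₂ : ℂ) (ha : s - 1 ≠ 0) (hc : s + z₁ - 1 ≠ 0)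
    (hd : s + z₂ - 1 ≠ 0) (hf : s + z₁ + z₂ - 1 ≠ 0) :
    deriv (fun w₁ : ℂ =>
      deriv (fun w₂ : ℂ =>
        (s + w₁ - 1) * (s + w₂ - 1) * (s + z₁ - 1) * (s + z₂ - 1) /
          ((s - 1) * (s + w₁ + w₂ - 1) * (s + w₁ + z₂ - 1) *
            (s + z₁ + w₂ - 1) * (s + z₁ + z₂ - 1))) 0) 0
    = ((s + z₁ - 1) * (s + z₂ - 1) + (s - 1) ^ 2) /
        ((s - 1) ^ 2 * (s + z₁ - 1) * (s + z₁ + z₂ - 1) * (s + z₂ - 1)) := by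
  have hev : (fun w₁ : ℂ =>
      deriv (fun w₂ : ℂ =>
        (s + w₁ - 1) * (s + w₂ - 1) * (s + z₁ - 1) * (s + z₂ - 1) /
          ((s - 1) * (s + w₁ + w₂ - 1) * (s + w₁ + z₂ - 1) *
            (s + z₁ + w₂ - 1) * (s + z₁ + z₂ - 1))) 0)
      =ᶠ[nhds (0:ℂ)] (fun w₁ : ℂ =>
        (s + z₂ - 1) * ((s + w₁ - 1) * (s + z₁ - 1) - (s - 1) * (s + w₁ - 1) - (s - 1) * (s + z₁ - 1)) /
          ((s - 1) * (s + w₁ + z₂ - 1) * (s + z₁ + z₂ - 1) * (s + w₁ - 1) * (s + z₁ - 1))) := by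
    filter_upwards [ev_ne (fun w₁ : ℂ => s + w₁ - 1) (by fun_prop) (by simpa using ha),
      ev_ne (fun w₁ : ℂ => s + w₁ + z₂ - 1) (by fun_prop) (by simpa using hd)] with w₁ hb he
    exact lvl1 s w₁ z₁ z₂ ha hb hc he hf
  rw [hev.deriv_eq]
  have hl : HasDerivAt (fun w₁ : ℂ => s + w₁ - 1) 1 0 := by
    simpa using ((hasDerivAt_id (0:ℂ)).const_add s).sub_const 1
  have hl2 : HasDerivAt (fun w₁ : ℂ => s + w₁ + z₂ - 1) 1 0 := by
    simpa using (((hasDerivAt_id (0:ℂ)).const_add s).add_const z₂).sub_const 1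
  have hN := (((hl.mul_const (s + z₁ - 1)).sub (hl.const_mul (s - 1))).sub_const
      ((s - 1) * (s + z₁ - 1))).const_mul (s + z₂ - 1)
  have hD := (((hl2.const_mul (s - 1)).mul_const (s + z₁ + z₂ - 1)).mul hl).mul_const (s + z₁ - 1)
  have hD0 : (s - 1) * (s + (0:ℂ) + z₂ - 1) * (s + z₁ + z₂ - 1) * (s + (0:ℂ) - 1) *
      (s + z₁ - 1) ≠ 0 := by
    simp only [add_zero, zero_add]
    exact mul_ne_zero (mul_ne_zero (mul_ne_zero (mul_ne_zero ha hd) hf) ha) hc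
  have hF := hN.div hD hD0
  refine hF.deriv.trans ?_
  beta_reduce
  simp only [add_zero, zero_add, one_mul, mul_one, Pi.mul_apply, Pi.sub_apply]
  rw [div_eq_div_iff (pow_ne_zero 2 (by
      simpa only [add_zero, zero_add] using hD0))
    (mul_ne_zero (mul_ne_zero (mul_ne_zero (pow_ne_zero 2 ha) hc) hf) hd)]
  ring

private lemma lvl3 (s z₁ : ℂ) (ha : s - 1 ≠ 0) (hc : s + z₁ - 1 ≠ 0) :
    deriv (fun z₂ : ℂ =>
      deriv (fun w₁ : ℂ =>
        deriv (fun w₂ : ℂ =>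
          (s + w₁ - 1) * (s + w₂ - 1) * (s + z₁ - 1) * (s + z₂ - 1) /
            ((s - 1) * (s + w₁ + w₂ - 1) * (s + w₁ + z₂ - 1) *
              (s + z₁ + w₂ - 1) * (s + z₁ + z₂ - 1))) 0) 0) 0
    = -(2 * (s + z₁ - 1) + (s - 1)) / ((s - 1) ^ 2 * (s + z₁ - 1) ^ 3) := by
  have hev : (fun z₂ : ℂ =>
      deriv (fun w₁ : ℂ =>
        deriv (fun w₂ : ℂ =>
          (s + w₁ - 1) * (s + w₂ - 1) * (s + z₁ - 1) * (s + z₂ - 1) /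
            ((s - 1) * (s + w₁ + w₂ - 1) * (s + w₁ + z₂ - 1) *
              (s + z₁ + w₂ - 1) * (s + z₁ + z₂ - 1))) 0) 0)
      =ᶠ[nhds (0:ℂ)] (fun z₂ : ℂ =>
        ((s + z₁ - 1) * (s + z₂ - 1) + (s - 1) ^ 2) /
          ((s - 1) ^ 2 * (s + z₁ - 1) * (s + z₁ + z₂ - 1) * (s + z₂ - 1))) := by
    filter_upwards [ev_ne (fun z₂ : ℂ => s + z₂ - 1) (by fun_prop) (by simpa using ha),
      ev_ne (fun z₂ : ℂ => s + z₁ + z₂ - 1) (by fun_prop) (by simpa using hc)] with z₂ hd hf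
    exact lvl2 s z₁ z₂ ha hc hd hf
  rw [hev.deriv_eq]
  have hl : HasDerivAt (fun z₂ : ℂ => s + z₂ - 1) 1 0 := by
    simpa using ((hasDerivAt_id (0:ℂ)).const_add s).sub_const 1
  have hlf : HasDerivAt (fun z₂ : ℂ => s + z₁ + z₂ - 1) 1 0 := by
    simpa using ((hasDerivAt_id (0:ℂ)).const_add (s + z₁)).sub_const 1
  have hN := (hl.const_mul (s + z₁ - 1)).add_const ((s - 1) ^ 2)
  have hD := (hlf.const_mul ((s - 1) ^ 2 * (s + z₁ - 1))).mul hl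
  have hD0 : (s - 1) ^ 2 * (s + z₁ - 1) * (s + z₁ + (0:ℂ) - 1) * (s + (0:ℂ) - 1) ≠ 0 := by
    simp only [add_zero]
    exact mul_ne_zero (mul_ne_zero (mul_ne_zero (pow_ne_zero 2 ha) hc) hc) ha
  have hF := hN.div hD hD0
  refine hF.deriv.trans ?_
  beta_reduce
  simp only [add_zero, one_mul, mul_one, Pi.mul_apply]
  rw [div_eq_div_iff (pow_ne_zero 2 (by simpa only [add_zero] using hD0))
    (mul_ne_zero (pow_ne_zero 2 ha) (pow_ne_zero 3 hc))]
  ring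

theorem stmt_14 (s : ℂ) (hs : s ≠ 1) :
    deriv (fun z₁ : ℂ =>
      deriv (fun z₂ : ℂ =>
        deriv (fun w₁ : ℂ =>
          deriv (fun w₂ : ℂ =>
            (s + w₁ - 1) * (s + w₂ - 1) * (s + z₁ - 1) * (s + z₂ - 1) /
              ((s - 1) * (s + w₁ + w₂ - 1) * (s + w₁ + z₂ - 1) *
                (s + z₁ + w₂ - 1) * (s + z₁ + z₂ - 1))) 0) 0) 0) 0
      = 7 / (s - 1) ^ 5 := by
  have ha : s - 1 ≠ 0 := sub_ne_zero.mpr hs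
  have hev : (fun z₁ : ℂ =>
      deriv (fun z₂ : ℂ =>
        deriv (fun w₁ : ℂ =>
          deriv (fun w₂ : ℂ =>
            (s + w₁ - 1) * (s + w₂ - 1) * (s + z₁ - 1) * (s + z₂ - 1) /
              ((s - 1) * (s + w₁ + w₂ - 1) * (s + w₁ + z₂ - 1) *
                (s + z₁ + w₂ - 1) * (s + z₁ + z₂ - 1))) 0) 0) 0)
      =ᶠ[nhds (0:ℂ)] (fun z₁ : ℂ =>
        -(2 * (s + z₁ - 1) + (s - 1)) / ((s - 1) ^ 2 * (s + z₁ - 1) ^ 3)) := by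
    filter_upwards [ev_ne (fun z₁ : ℂ => s + z₁ - 1) (by fun_prop) (by simpa using ha)] with z₁ hc
    exact lvl3 s z₁ ha hc
  rw [hev.deriv_eq]
  have hl : HasDerivAt (fun z₁ : ℂ => s + z₁ - 1) 1 0 := by
    simpa using ((hasDerivAt_id (0:ℂ)).const_add s).sub_const 1
  have hN := ((hl.const_mul 2).add_const (s - 1)).neg
  have hD := (hl.pow 3).const_mul ((s - 1) ^ 2)
  have hD0 : (s - 1) ^ 2 * (s + (0:ℂ) - 1) ^ 3 ≠ 0 := by
    simp only [add_zero]
    exact mul_ne_zero (pow_ne_zero 2 ha) (pow_ne_zero 3 ha)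
  have hF := hN.div hD hD0
  refine hF.deriv.trans ?_
  beta_reduce
  simp only [add_zero, one_mul, mul_one, Pi.mul_apply, Pi.pow_apply, Pi.neg_apply]
  rw [div_eq_div_iff (pow_ne_zero 2 (by simpa only [add_zero] using hD0))
    (pow_ne_zero 5 ha)]
  ring
end

section
/- Let a : ℕ → ℂ be supported on primes p ≤ x and define coefficients a_{m,x}(n) by (∑_{p ≤ x} a(p) p^{−s})^m = ∑_{n ≤ x^m} a_{m,x}(n) n^{−s}, i.e., a_{m,x}(n) = ∑_{p₁⋯p_m = n, each p_i ≤ x prime} a(p₁)⋯a(p_m). Then ∑_{n ≤ x^m} |a_{m,x}(n)|²/n ≤ m! · (∑_{p ≤ x} |a(p)|²/p)^m. -/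
open Finset

private lemma exists_perm_of_ofFn_perm {n : ℕ} {f g : Fin n → ℕ}
    (h : List.Perm (List.ofFn f) (List.ofFn g)) :
    ∃ σ : Equiv.Perm (Fin n), f = g ∘ σ := by
  have h1 : List.Perm (List.ofFn (f ∘ Tuple.sort f)) (List.ofFn (g ∘ Tuple.sort g)) :=
    ((Equiv.Perm.ofFn_comp_perm (Tuple.sort f) f).trans h).trans
      (Equiv.Perm.ofFn_comp_perm (Tuple.sort g) g).symm
  have h2 : List.ofFn (f ∘ Tuple.sort f) = List.ofFn (g ∘ Tuple.sort g) :=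
    List.Perm.eq_of_sortedLE (Tuple.monotone_sort f).sortedLE_ofFn
      (Tuple.monotone_sort g).sortedLE_ofFn h1
  have h3 : f ∘ Tuple.sort f = g ∘ Tuple.sort g := List.ofFn_injective h2
  refine ⟨(Tuple.sort f)⁻¹.trans (Tuple.sort g), funext fun i => ?_⟩
  have := congrFun h3 ((Tuple.sort f)⁻¹ i)
  simpa using this

private lemma card_fiber_le_factorial {P : Finset ℕ} (hP : ∀ p ∈ P, p.Prime) (m n : ℕ) :
    ((Fintype.piFinset fun _ : Fin m => P).filter (fun f => ∏ i, f i = n)).card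
      ≤ m.factorial := by
  classical
  set S := (Fintype.piFinset fun _ : Fin m => P).filter (fun f => ∏ i, f i = n) with hS
  rcases S.eq_empty_or_nonempty with h | ⟨g, hg⟩
  · simp [h, (Nat.factorial_pos m).le]
  · have key : ∀ f ∈ S, List.Perm (List.ofFn f) (List.ofFn g) := by
      intro f hf
      simp only [hS, mem_filter, Fintype.mem_piFinset] at hf hg
      have hfl : List.Perm (List.ofFn f) n.primeFactorsList :=
        Nat.primeFactorsList_unique (by simpa [List.prod_ofFn] using hf.2)
          (by intro p hp; rw [List.mem_ofFn] at hp; obtain ⟨i, rfl⟩ := hp; exact hP _ (hf.1 i))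
      have hgl : List.Perm (List.ofFn g) n.primeFactorsList :=
        Nat.primeFactorsList_unique (by simpa [List.prod_ofFn] using hg.2)
          (by intro p hp; rw [List.mem_ofFn] at hp; obtain ⟨i, rfl⟩ := hp; exact hP _ (hg.1 i))
      exact hfl.trans hgl.symm
    have hcard : S.card ≤ (Finset.univ : Finset (Equiv.Perm (Fin m))).card := by
      apply Finset.card_le_card_of_injOn
        (fun f => if h : ∃ σ : Equiv.Perm (Fin m), f = g ∘ σ then h.choose else 1)
      · intro f _; exact mem_univ _
      · intro f hf f' hf' heq
        have e1 : ∃ σ : Equiv.Perm (Fin m), f = g ∘ σ := exists_perm_of_ofFn_perm (key f hf)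
        have e2 : ∃ σ : Equiv.Perm (Fin m), f' = g ∘ σ := exists_perm_of_ofFn_perm (key f' hf')
        simp only [dif_pos e1, dif_pos e2] at heq
        rw [e1.choose_spec, e2.choose_spec, heq]
    simpa [Finset.card_univ, Fintype.card_perm] using hcard

theorem stmt_16 (x : ℝ) (hx : 2 ≤ x) (m : ℕ) (a : ℕ → ℂ)
    (ha : ∀ p : ℕ, a p ≠ 0 → p.Prime ∧ (p : ℝ) ≤ x) :
    ∑ n ∈ Finset.Icc 1 (Nat.floor (x ^ m)),
        ‖∑ f ∈ (Fintype.piFinset fun _ : Fin m =>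
              (Finset.range (Nat.floor x + 1)).filter Nat.Prime).filter
              (fun f => ∏ i, f i = n),
            ∏ i, a (f i)‖ ^ 2 / (n : ℝ)
      ≤ (m.factorial : ℝ) *
          (∑ p ∈ (Finset.range (Nat.floor x + 1)).filter Nat.Prime,
            ‖a p‖ ^ 2 / (p : ℝ)) ^ m := by
  classical
  set P := (Finset.range (Nat.floor x + 1)).filter Nat.Prime with hP
  have hPprime : ∀ p ∈ P, p.Prime := fun p hp => (mem_filter.mp hp).2
  have hPle : ∀ p ∈ P, (p : ℝ) ≤ x := by
    intro p hp
    have h1 : p ≤ Nat.floor x := Nat.lt_succ_iff.mp (mem_range.mp (mem_filter.mp hp).1)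
    calc (p : ℝ) ≤ (Nat.floor x : ℝ) := by exact_mod_cast h1
      _ ≤ x := Nat.floor_le (by linarith)
  set S := fun n => (Fintype.piFinset fun _ : Fin m => P).filter (fun f => ∏ i, f i = n)
    with hSdef
  -- Step 1: pointwise Cauchy-Schwarz + card bound
  have step1 : ∀ n ∈ Finset.Icc 1 (Nat.floor (x ^ m)),
      ‖∑ f ∈ S n, ∏ i, a (f i)‖ ^ 2 / (n : ℝ)
        ≤ ((m.factorial : ℝ) * ∑ f ∈ S n, ∏ i, ‖a (f i)‖ ^ 2) / (n : ℝ) := by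
    intro n hn
    have hn1 : 1 ≤ n := (mem_Icc.mp hn).1
    have hnpos : (0 : ℝ) < n := by exact_mod_cast hn1
    apply div_le_div_of_nonneg_right ?_ hnpos.le
    calc ‖∑ f ∈ S n, ∏ i, a (f i)‖ ^ 2
        ≤ (∑ f ∈ S n, ‖∏ i, a (f i)‖) ^ 2 := by
          gcongr
          exact norm_sum_le _ _
      _ ≤ ((S n).card : ℝ) * ∑ f ∈ S n, ‖∏ i, a (f i)‖ ^ 2 := by
          exact sq_sum_le_card_mul_sum_sq
      _ = ((S n).card : ℝ) * ∑ f ∈ S n, ∏ i, ‖a (f i)‖ ^ 2 := by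
          congr 1
          refine Finset.sum_congr rfl fun f _ => ?_
          rw [norm_prod, ← Finset.prod_pow]
      _ ≤ (m.factorial : ℝ) * ∑ f ∈ S n, ∏ i, ‖a (f i)‖ ^ 2 := by
          apply mul_le_mul_of_nonneg_right
          · exact_mod_cast card_fiber_le_factorial hPprime m n
          · exact Finset.sum_nonneg fun f _ => Finset.prod_nonneg fun i _ => by positivity
  -- Step 2: sum and reorganize
  calc ∑ n ∈ Finset.Icc 1 (Nat.floor (x ^ m)), ‖∑ f ∈ S n, ∏ i, a (f i)‖ ^ 2 / (n : ℝ)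
      ≤ ∑ n ∈ Finset.Icc 1 (Nat.floor (x ^ m)),
          ((m.factorial : ℝ) * ∑ f ∈ S n, ∏ i, ‖a (f i)‖ ^ 2) / (n : ℝ) :=
        Finset.sum_le_sum step1
    _ = (m.factorial : ℝ) * ∑ n ∈ Finset.Icc 1 (Nat.floor (x ^ m)),
          ∑ f ∈ S n, ∏ i, (‖a (f i)‖ ^ 2 / (f i : ℝ)) := by
        rw [Finset.mul_sum]
        refine Finset.sum_congr rfl fun n hn => ?_
        rw [mul_div_assoc, Finset.sum_div]
        congr 1
        refine Finset.sum_congr rfl fun f hf => ?_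
        have hfn : ∏ i, f i = n := (mem_filter.mp hf).2
        rw [← hfn]
        push_cast
        rw [← Finset.prod_div_distrib]
    _ = (m.factorial : ℝ) * ∑ f ∈ Fintype.piFinset (fun _ : Fin m => P),
          ∏ i, (‖a (f i)‖ ^ 2 / (f i : ℝ)) := by
        congr 1
        apply Finset.sum_fiberwise_of_maps_to
        intro f hf
        rw [Fintype.mem_piFinset] at hf
        rw [mem_Icc]
        constructor
        · exact Finset.one_le_prod' fun i _ => (hPprime _ (hf i)).one_lt.le
        · apply Nat.le_floor
          push_cast
          calc ∏ i, (f i : ℝ) ≤ ∏ _i : Fin m, x :=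
                Finset.prod_le_prod (fun i _ => by positivity)
                  (fun i _ => hPle _ (hf i))
            _ = x ^ m := by simp
    _ = (m.factorial : ℝ) * (∑ p ∈ P, ‖a p‖ ^ 2 / (p : ℝ)) ^ m := by
        congr 1
        have hpow : (∑ p ∈ P, ‖a p‖ ^ 2 / (p : ℝ)) ^ m
            = ∏ _i : Fin m, ∑ p ∈ P, ‖a p‖ ^ 2 / (p : ℝ) := by
          simp [Finset.prod_const]
        rw [hpow, Finset.prod_univ_sum]
end

section
/- Let a : ℕ → ℂ be supported on primes p ≤ √x and define a_{m,√x}(n) = ∑_{p₁⋯p_m = n, each p_i ≤ √x prime} a(p₁)⋯a(p_m). Then ∑_{n ≤ x^{m/2}} |a_{m,√x}(n)|²/n² ≤ m! · (∑_{p ≤ √x} |a(p)|²/p²)^m. -/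
open Finset

lemma fiber_card_le_factorial (m n : ℕ) (s : Finset ℕ) (hs : ∀ p ∈ s, Nat.Prime p) :
    (((Fintype.piFinset fun _ : Fin m => s)).filter (fun f => ∏ i, f i = n)).card
      ≤ m.factorial := by
  set F := ((Fintype.piFinset fun _ : Fin m => s)).filter (fun f => ∏ i, f i = n) with hF
  rcases F.eq_empty_or_nonempty with h | ⟨f₀, hf₀⟩
  · simp [h, Nat.factorial_pos m |>.le]
  · have key : ∀ g ∈ F, List.Perm (List.ofFn g) n.primeFactorsList := by
      intro g hg
      rw [hF, mem_filter, Fintype.mem_piFinset] at hg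
      refine Nat.primeFactorsList_unique ?_ ?_
      · rw [List.prod_ofFn]; exact hg.2
      · intro p hp
        rw [List.mem_ofFn] at hp
        obtain ⟨i, rfl⟩ := hp
        exact hs _ (hg.1 i)
    have hsub : F ⊆ Finset.image (fun σ : Equiv.Perm (Fin m) => f₀ ∘ σ) Finset.univ := by
      intro g hg
      have hperm : List.Perm (List.ofFn (g ∘ Tuple.sort g)) (List.ofFn (f₀ ∘ Tuple.sort f₀)) :=
        ((Equiv.Perm.ofFn_comp_perm _ g).trans ((key g hg).trans
          (key f₀ hf₀).symm)).trans (Equiv.Perm.ofFn_comp_perm _ f₀).symm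
      have heq : g ∘ Tuple.sort g = f₀ ∘ Tuple.sort f₀ := by
        rw [← List.ofFn_inj]
        exact List.Perm.eq_of_sortedLE
          (Tuple.monotone_sort g).sortedLE_ofFn (Tuple.monotone_sort f₀).sortedLE_ofFn hperm
      rw [Finset.mem_image]
      refine ⟨(Tuple.sort g)⁻¹.trans (Tuple.sort f₀), Finset.mem_univ _, ?_⟩
      funext i
      calc (f₀ ∘ ((Tuple.sort g)⁻¹.trans (Tuple.sort f₀))) i
          = (f₀ ∘ Tuple.sort f₀) ((Tuple.sort g)⁻¹ i) := rfl
        _ = (g ∘ Tuple.sort g) ((Tuple.sort g)⁻¹ i) := by rw [heq]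
        _ = g i := by simp
    calc F.card ≤ _ := Finset.card_le_card hsub
      _ ≤ (Finset.univ : Finset (Equiv.Perm (Fin m))).card := Finset.card_image_le
      _ = m.factorial := by simp [Fintype.card_perm]

theorem stmt_17 (x : ℝ) (hx : 4 ≤ x) (m : ℕ) (a : ℕ → ℂ)
    (ha : ∀ p : ℕ, a p ≠ 0 → p.Prime ∧ (p : ℝ) ≤ Real.sqrt x) :
    ∑ n ∈ Finset.Icc 1 (Nat.floor (Real.sqrt x ^ m)),
        ‖∑ f ∈ (Fintype.piFinset fun _ : Fin m =>
              (Finset.range (Nat.floor (Real.sqrt x) + 1)).filter Nat.Prime).filter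
              (fun f => ∏ i, f i = n),
            ∏ i, a (f i)‖ ^ 2 / (n : ℝ) ^ 2
      ≤ (m.factorial : ℝ) *
          (∑ p ∈ (Finset.range (Nat.floor (Real.sqrt x) + 1)).filter Nat.Prime,
            ‖a p‖ ^ 2 / (p : ℝ) ^ 2) ^ m := by
  set s := (Finset.range (Nat.floor (Real.sqrt x) + 1)).filter Nat.Prime with hs
  set N := Nat.floor (Real.sqrt x ^ m) with hN
  have hsprime : ∀ p ∈ s, Nat.Prime p := fun p hp => (Finset.mem_filter.mp hp).2
  have hsx : ∀ p ∈ s, (p : ℝ) ≤ Real.sqrt x := by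
    intro p hp
    have h1 : p < Nat.floor (Real.sqrt x) + 1 :=
      Finset.mem_range.mp (Finset.mem_filter.mp hp).1
    have h2 : (p : ℝ) ≤ (Nat.floor (Real.sqrt x) : ℝ) := by
      exact_mod_cast Nat.lt_succ_iff.mp h1
    exact h2.trans (Nat.floor_le (Real.sqrt_nonneg x))
  -- every tuple lands in Icc 1 N
  have hmaps : ∀ f ∈ (Fintype.piFinset fun _ : Fin m => s),
      (∏ i, f i) ∈ Finset.Icc 1 N := by
    intro f hf
    rw [Fintype.mem_piFinset] at hf
    rw [Finset.mem_Icc]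
    constructor
    · exact Finset.one_le_prod' fun i _ => (hsprime _ (hf i)).one_lt.le
    · rw [hN]
      apply Nat.le_floor
      push_cast
      calc ∏ i, (f i : ℝ) ≤ ∏ _i : Fin m, Real.sqrt x :=
            Finset.prod_le_prod (fun i _ => by positivity) (fun i _ => hsx _ (hf i))
        _ = Real.sqrt x ^ m := by rw [Finset.prod_const, Finset.card_univ, Fintype.card_fin]
  -- pointwise bound
  have hpt : ∀ n ∈ Finset.Icc 1 N,
      ‖∑ f ∈ (Fintype.piFinset fun _ : Fin m => s).filter (fun f => ∏ i, f i = n),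
          ∏ i, a (f i)‖ ^ 2 / (n : ℝ) ^ 2
        ≤ (m.factorial : ℝ) *
          ∑ f ∈ (Fintype.piFinset fun _ : Fin m => s).filter (fun f => ∏ i, f i = n),
            ∏ i, (‖a (f i)‖ ^ 2 / (f i : ℝ) ^ 2) := by
    intro n hn
    have hn1 : 1 ≤ n := (Finset.mem_Icc.mp hn).1
    have hnpos : (0 : ℝ) < (n : ℝ) ^ 2 := by positivity
    set F := (Fintype.piFinset fun _ : Fin m => s).filter (fun f => ∏ i, f i = n) with hF
    have step1 : ‖∑ f ∈ F, ∏ i, a (f i)‖ ^ 2 ≤ (∑ f ∈ F, ‖∏ i, a (f i)‖) ^ 2 := by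
      apply pow_le_pow_left₀ (norm_nonneg _) (norm_sum_le _ _)
    have step2 : (∑ f ∈ F, ‖∏ i, a (f i)‖) ^ 2
        ≤ (F.card : ℝ) * ∑ f ∈ F, ‖∏ i, a (f i)‖ ^ 2 :=
      sq_sum_le_card_mul_sum_sq
    have hcard : (F.card : ℝ) ≤ (m.factorial : ℝ) := by
      exact_mod_cast fiber_card_le_factorial m n s hsprime
    have step3 : (F.card : ℝ) * ∑ f ∈ F, ‖∏ i, a (f i)‖ ^ 2
        ≤ (m.factorial : ℝ) * ∑ f ∈ F, ‖∏ i, a (f i)‖ ^ 2 := by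
      apply mul_le_mul_of_nonneg_right hcard
      exact Finset.sum_nonneg fun f _ => by positivity
    have key : ∑ f ∈ F, ‖∏ i, a (f i)‖ ^ 2 / (n : ℝ) ^ 2
        = ∑ f ∈ F, ∏ i, (‖a (f i)‖ ^ 2 / (f i : ℝ) ^ 2) := by
      apply Finset.sum_congr rfl
      intro f hf
      have hprod : ∏ i, f i = n := (Finset.mem_filter.mp hf).2
      rw [← hprod]
      push_cast
      rw [norm_prod, ← Finset.prod_pow, ← Finset.prod_pow, ← Finset.prod_div_distrib]
    calc ‖∑ f ∈ F, ∏ i, a (f i)‖ ^ 2 / (n : ℝ) ^ 2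
        ≤ ((m.factorial : ℝ) * ∑ f ∈ F, ‖∏ i, a (f i)‖ ^ 2) / (n : ℝ) ^ 2 := by
          gcongr
          exact step1.trans (step2.trans step3)
      _ = (m.factorial : ℝ) * ∑ f ∈ F, ‖∏ i, a (f i)‖ ^ 2 / (n : ℝ) ^ 2 := by
          rw [mul_div_assoc, Finset.sum_div]
      _ = (m.factorial : ℝ) * ∑ f ∈ F, ∏ i, (‖a (f i)‖ ^ 2 / (f i : ℝ) ^ 2) := by rw [key]
  calc ∑ n ∈ Finset.Icc 1 N,
        ‖∑ f ∈ (Fintype.piFinset fun _ : Fin m => s).filter (fun f => ∏ i, f i = n),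
          ∏ i, a (f i)‖ ^ 2 / (n : ℝ) ^ 2
      ≤ ∑ n ∈ Finset.Icc 1 N, (m.factorial : ℝ) *
          ∑ f ∈ (Fintype.piFinset fun _ : Fin m => s).filter (fun f => ∏ i, f i = n),
            ∏ i, (‖a (f i)‖ ^ 2 / (f i : ℝ) ^ 2) := Finset.sum_le_sum hpt
    _ = (m.factorial : ℝ) * ∑ n ∈ Finset.Icc 1 N,
          ∑ f ∈ (Fintype.piFinset fun _ : Fin m => s).filter (fun f => ∏ i, f i = n),
            ∏ i, (‖a (f i)‖ ^ 2 / (f i : ℝ) ^ 2) := by rw [Finset.mul_sum]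
    _ = (m.factorial : ℝ) * ∑ f ∈ (Fintype.piFinset fun _ : Fin m => s),
            ∏ i, (‖a (f i)‖ ^ 2 / (f i : ℝ) ^ 2) := by
        rw [Finset.sum_fiberwise_of_maps_to hmaps]
    _ = (m.factorial : ℝ) * (∑ p ∈ s, ‖a p‖ ^ 2 / (p : ℝ) ^ 2) ^ m := by
        congr 1
        rw [show (∑ p ∈ s, ‖a p‖ ^ 2 / (p : ℝ) ^ 2) ^ m
            = ∏ _i : Fin m, ∑ p ∈ s, ‖a p‖ ^ 2 / (p : ℝ) ^ 2 by
          rw [Finset.prod_const, Finset.card_univ, Fintype.card_fin]]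
        rw [Finset.prod_univ_sum]
end
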